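/- arXiv:2502.05096 — 3 statements merged into one kernel-verified Lean document; each statement's English description precedes it below -/
import Mathlib

section
/- Let (C, C₋, C₊) be a Reedy category and (α, θ) : ([m], X) → ([n], Y) a morphism in ∫N^{-,+}(C). Let (α', θ') be the largest element of the set {(β, φ) : (α, θ) ≤ (β, φ)} (which exists). Then the map (β, φ) ↦ β is an order isomorphism from the poset {(β, φ) : (α, θ) ≤ (β, φ)} onto the closed interval {β : [m] → [n] in Δ with α ≤ β ≤ α' pointwise} (with the pointwise order). -/
namespace ReedyPaper

open CategoryTheory

universe v₂ u₂ v₁ u₁ v u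

variable {C : Type u} [Category.{v} C]

def IsIdMor {x y : C} (f : x ⟶ y) : Prop := ∃ h : x = y, f = eqToHom h

structure ReedyStruct (C : Type u) [Category.{v} C] where
  neg : MorphismProperty C
  pos : MorphismProperty C
  neg_id : ∀ x : C, neg (𝟙 x)
  pos_id : ∀ x : C, pos (𝟙 x)
  neg_comp : ∀ {x y z : C} (f : x ⟶ y) (g : y ⟶ z), neg f → neg g → neg (f ≫ g)
  pos_comp : ∀ {x y z : C} (f : x ⟶ y) (g : y ⟶ z), pos f → pos g → pos (f ≫ g)
  factor_existsUnique : ∀ {x y : C} (f : x ⟶ y),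
    ∃! t : Σ z : C, (x ⟶ z) × (z ⟶ y), neg t.2.1 ∧ pos t.2.2 ∧ t.2.1 ≫ t.2.2 = f
  wf : WellFounded (fun x y : C =>
    (∃ f : x ⟶ y, pos f ∧ ¬ IsIdMor f) ∨ (∃ f : y ⟶ x, neg f ∧ ¬ IsIdMor f))

structure ChainObj (C : Type u) [Category.{v} C] where
  n : ℕ
  X : Fin (n + 1) ⥤ C

structure ChainHom (P Q : ChainObj C) where
  α : Fin (P.n + 1) →o Fin (Q.n + 1)
  θ : ∀ i : Fin (P.n + 1), P.X.obj i ⟶ Q.X.obj (α i)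
  natural : ∀ {i j : Fin (P.n + 1)} (h : i ≤ j),
    P.X.map (homOfLE h) ≫ θ j = θ i ≫ Q.X.map (homOfLE (α.monotone h))

theorem ChainHom.ext' {P Q : ChainObj C} {f g : ChainHom P Q}
    (hα : f.α = g.α) (hθ : HEq f.θ g.θ) : f = g := by
  cases f; cases g; cases hα; cases hθ; rfl

def ChainHom.id (P : ChainObj C) : ChainHom P P where
  α := OrderHom.id
  θ i := 𝟙 _
  natural h := by exact (Category.comp_id _).trans (Category.id_comp _).symm

def ChainHom.comp {P Q S : ChainObj C} (f : ChainHom P Q) (g : ChainHom Q S) :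
    ChainHom P S where
  α := g.α.comp f.α
  θ i := f.θ i ≫ g.θ (f.α i)
  natural {i j} h := by
    show P.X.map (homOfLE h) ≫ f.θ j ≫ g.θ (f.α j) =
      (f.θ i ≫ g.θ (f.α i)) ≫ S.X.map (homOfLE (g.α.monotone (f.α.monotone h)))
    rw [← Category.assoc, f.natural h, Category.assoc, g.natural (f.α.monotone h),
      ← Category.assoc]

instance : Category (ChainObj C) where
  Hom := ChainHom
  id := ChainHom.id
  comp := ChainHom.comp
  id_comp f := ChainHom.ext' rfl (heq_of_eq (funext fun i => Category.id_comp _))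
  comp_id f := ChainHom.ext' rfl (heq_of_eq (funext fun i => Category.comp_id _))
  assoc f g h := ChainHom.ext' rfl (heq_of_eq (funext fun i => Category.assoc _ _ _))

/-- The partial order on the hom-sets of `∫N(C)` (and of `∫N^{-,+}(C)`):
`(α, θ) ≤ (α', θ')` iff `α ≤ α'` pointwise and `θ'ᵢ = Y(α(i) ≤ α'(i)) ∘ θᵢ` for all `i`. -/
def ChainHom.le {P Q : ChainObj C} (f g : ChainHom P Q) : Prop :=
  (∀ i, f.α i ≤ g.α i) ∧
    ∀ (i : Fin (P.n + 1)) (h : f.α i ≤ g.α i), g.θ i = f.θ i ≫ Q.X.map (homOfLE h)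

theorem ChainHom.le_comp_right {P Q S : ChainObj C} {f f' : P ⟶ Q} (g : Q ⟶ S)
    (h : ChainHom.le f f') : ChainHom.le (f ≫ g) (f' ≫ g) := by
  refine ⟨fun i => g.α.monotone (h.1 i), fun i hi => ?_⟩
  show f'.θ i ≫ g.θ (f'.α i) = (f.θ i ≫ g.θ (f.α i)) ≫ S.X.map (homOfLE hi)
  rw [h.2 i (h.1 i), Category.assoc, g.natural (h.1 i), ← Category.assoc]
  rfl

theorem ChainHom.le_comp_left {P Q S : ChainObj C} (f : P ⟶ Q) {g g' : Q ⟶ S}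
    (h : ChainHom.le g g') : ChainHom.le (f ≫ g) (f ≫ g') := by
  refine ⟨fun i => h.1 (f.α i), fun i hi => ?_⟩
  show f.θ i ≫ g'.θ (f.α i) = (f.θ i ≫ g.θ (f.α i)) ≫ S.X.map (homOfLE hi)
  rw [h.2 (f.α i) (h.1 (f.α i)), ← Category.assoc]
  rfl

/-- Objects of `∫N^{-,+}(C)`: chains all of whose morphisms lie in `C₋`. -/
structure NegObj (R : ReedyStruct C) where
  n : ℕ
  X : Fin (n + 1) ⥤ C
  negMap : ∀ {i j : Fin (n + 1)} (h : i ≤ j), R.neg (X.map (homOfLE h))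

variable {R : ReedyStruct C}

/-- The underlying object of `∫N(C)`. -/
def NegObj.chain (P : NegObj R) : ChainObj C := ⟨P.n, P.X⟩

/-- Morphisms of `∫N^{-,+}(C)`: morphisms of `∫N(C)` all of whose components lie in `C₊`. -/
def NegHomT (P Q : NegObj R) : Type v :=
  { f : P.chain ⟶ Q.chain // ∀ i, R.pos (f.θ i) }

def NegHomT.id (P : NegObj R) : NegHomT P P := ⟨𝟙 P.chain, fun _ => R.pos_id _⟩

def NegHomT.comp {P Q S : NegObj R} (f : NegHomT P Q) (g : NegHomT Q S) : NegHomT P S :=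
  ⟨f.1 ≫ g.1, fun i => by
    show R.pos (f.1.θ i ≫ g.1.θ (f.1.α i))
    exact R.pos_comp _ _ (f.2 i) (g.2 _)⟩

theorem NegHomT.id_comp {P Q : NegObj R} (f : NegHomT P Q) : (NegHomT.id P).comp f = f := by
  apply Subtype.ext
  show 𝟙 P.chain ≫ f.1 = f.1
  exact Category.id_comp f.1

theorem NegHomT.comp_id {P Q : NegObj R} (f : NegHomT P Q) : f.comp (NegHomT.id Q) = f := by
  apply Subtype.ext
  show f.1 ≫ 𝟙 Q.chain = f.1
  exact Category.comp_id f.1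

theorem NegHomT.comp_assoc {P Q S T : NegObj R} (f : NegHomT P Q) (g : NegHomT Q S)
    (h : NegHomT S T) : (f.comp g).comp h = f.comp (g.comp h) := by
  apply Subtype.ext
  show (f.1 ≫ g.1) ≫ h.1 = f.1 ≫ (g.1 ≫ h.1)
  exact Category.assoc f.1 g.1 h.1

/-- The category `∫N^{-,+}(C)`. -/
instance : Category (NegObj R) where
  Hom := NegHomT
  id := NegHomT.id
  comp := NegHomT.comp
  id_comp := NegHomT.id_comp
  comp_id := NegHomT.comp_id
  assoc := NegHomT.comp_assoc

/-- The order on the hom-sets of `∫N^{-,+}(C)`. -/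
def NegHom.le {P Q : NegObj R} (f g : P ⟶ Q) : Prop := ChainHom.le f.1 g.1

/-- The equivalence relation `∼` on the hom-sets of `∫N^{-,+}(C)`: the
symmetric-transitive closure of `≤`. -/
def NegHom.equiv {P Q : NegObj R} (f g : P ⟶ Q) : Prop :=
  Relation.EqvGen (fun a b : P ⟶ Q => NegHom.le a b) f g

theorem NegHom.le_comp_right {P Q S : NegObj R} {f f' : P ⟶ Q} (g : Q ⟶ S)
    (h : NegHom.le f f') : NegHom.le (f ≫ g) (f' ≫ g) :=
  ChainHom.le_comp_right g.1 h

theorem NegHom.le_comp_left {P Q S : NegObj R} (f : P ⟶ Q) {g g' : Q ⟶ S}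
    (h : NegHom.le g g') : NegHom.le (f ≫ g) (f ≫ g') :=
  ChainHom.le_comp_left f.1 h

/-- Identity-reflectingness of a chain. -/
def NegObj.IdRefl (P : NegObj R) : Prop :=
  ∀ {i j : Fin (P.n + 1)} (h : i ≤ j), IsIdMor (P.X.map (homOfLE h)) → i = j

/-- Objects of `∫N^{--,+}_+(C)`: identity-reflecting chains in `C₋`. -/
structure StrictObj (R : ReedyStruct C) where
  toNegObj : NegObj R
  idRefl : toNegObj.IdRefl

/-- Morphisms of `∫N^{--,+}_+(C)`: morphisms of `∫N^{-,+}(C)` with `α` injective. -/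
def StrictHomT (P Q : StrictObj R) : Type v :=
  { f : P.toNegObj ⟶ Q.toNegObj // Function.Injective f.1.α }

def StrictHomT.id (P : StrictObj R) : StrictHomT P P :=
  ⟨𝟙 P.toNegObj, fun _ _ h => h⟩

def StrictHomT.comp {P Q S : StrictObj R} (f : StrictHomT P Q) (g : StrictHomT Q S) :
    StrictHomT P S :=
  ⟨f.1 ≫ g.1, fun _ _ h => f.2 (g.2 h)⟩

/-- The category `∫N^{--,+}_+(C)`. -/
instance : Category (StrictObj R) where
  Hom := StrictHomT
  id := StrictHomT.id
  comp := StrictHomT.comp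
  id_comp f := Subtype.ext (Category.id_comp f.1)
  comp_id f := Subtype.ext (Category.comp_id f.1)
  assoc f g h := Subtype.ext (Category.assoc f.1 g.1 h.1)

/-- The order on the hom-sets of `∫N^{--,+}_+(C)`. -/
def StrictHom.le {P Q : StrictObj R} (f g : P ⟶ Q) : Prop := NegHom.le f.1 g.1

/-- The equivalence relation `∼` on the hom-sets of `∫N^{--,+}_+(C)`. -/
def StrictHom.equiv {P Q : StrictObj R} (f g : P ⟶ Q) : Prop :=
  Relation.EqvGen (fun a b : P ⟶ Q => StrictHom.le a b) f g

theorem StrictHom.le_comp_right {P Q S : StrictObj R} {f f' : P ⟶ Q} (g : Q ⟶ S)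
    (h : StrictHom.le f f') : StrictHom.le (f ≫ g) (f' ≫ g) :=
  NegHom.le_comp_right g.1 h

theorem StrictHom.le_comp_left {P Q S : StrictObj R} (f : P ⟶ Q) {g g' : Q ⟶ S}
    (h : StrictHom.le g g') : StrictHom.le (f ≫ g) (f ≫ g') :=
  NegHom.le_comp_left f.1 h

/-- Objects of `Down_*(C)`: the same as those of `∫N^{-,+}(C)`. -/
structure DownStar (R : ReedyStruct C) where
  obj : NegObj R

/-- The category `Down_*(C)`: hom-sets are the quotients of those of `∫N^{-,+}(C)`
by the symmetric-transitive closure of `≤`. -/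
instance : Category (DownStar R) where
  Hom P Q := Quot (fun f g : P.obj ⟶ Q.obj => NegHom.le f g)
  id P := Quot.mk _ (𝟙 P.obj)
  comp {P Q S} f g :=
    Quot.lift
      (fun f' => Quot.lift (fun g' => Quot.mk _ (f' ≫ g'))
        (fun _ _ hg => Quot.sound (NegHom.le_comp_left f' hg)) g)
      (fun f₁ f₂ hf => Quot.inductionOn g (fun g' =>
        Quot.sound (NegHom.le_comp_right g' hf))) f
  id_comp f := Quot.inductionOn f fun f' => congrArg (Quot.mk _) (Category.id_comp f')
  comp_id f := Quot.inductionOn f fun f' => congrArg (Quot.mk _) (Category.comp_id f')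
  assoc f g h :=
    Quot.inductionOn f fun f' => Quot.inductionOn g fun g' => Quot.inductionOn h fun h' =>
      congrArg (Quot.mk _) (Category.assoc f' g' h')

/-- Objects of `Down(C)`: the same as those of `∫N^{--,+}_+(C)`. -/
structure Down (R : ReedyStruct C) where
  obj : StrictObj R

/-- The category `Down(C)`: hom-sets are the quotients of those of `∫N^{--,+}_+(C)`
by the symmetric-transitive closure of `≤`. -/
instance : Category (Down R) where
  Hom P Q := Quot (fun f g : P.obj ⟶ Q.obj => StrictHom.le f g)
  id P := Quot.mk _ (𝟙 P.obj)
  comp {P Q S} f g :=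
    Quot.lift
      (fun f' => Quot.lift (fun g' => Quot.mk _ (f' ≫ g'))
        (fun _ _ hg => Quot.sound (StrictHom.le_comp_left f' hg)) g)
      (fun f₁ f₂ hf => Quot.inductionOn g (fun g' =>
        Quot.sound (StrictHom.le_comp_right g' hf))) f
  id_comp f := Quot.inductionOn f fun f' => congrArg (Quot.mk _) (Category.id_comp f')
  comp_id f := Quot.inductionOn f fun f' => congrArg (Quot.mk _) (Category.comp_id f')
  assoc f g h :=
    Quot.inductionOn f fun f' => Quot.inductionOn g fun g' => Quot.inductionOn h fun h' =>
      congrArg (Quot.mk _) (Category.assoc f' g' h')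

/-- The quotient functor `∫N^{-,+}(C) → Down_*(C)`. -/
def qStar (R : ReedyStruct C) : NegObj R ⥤ DownStar R where
  obj P := ⟨P⟩
  map f := Quot.mk _ f
  map_id _ := rfl
  map_comp _ _ := rfl

/-- The inclusion functor `Down(C) → Down_*(C)`. -/
def downInclusion (R : ReedyStruct C) : Down R ⥤ DownStar R where
  obj P := ⟨P.obj.toNegObj⟩
  map {P Q} f :=
    Quot.lift (fun f' : P.obj ⟶ Q.obj => Quot.mk _ f'.1) (fun _ _ h => Quot.sound h) f
  map_id _ := rfl
  map_comp {P Q S} f g := by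
    induction f using Quot.ind
    induction g using Quot.ind
    rfl

/-- The last-component functor `∫N(C) → C`. -/
def lastChain : ChainObj C ⥤ C where
  obj P := P.X.obj (Fin.last P.n)
  map {P Q} f := f.θ (Fin.last P.n) ≫ Q.X.map (homOfLE (Fin.le_last (f.α (Fin.last P.n))))
  map_id P := by
    show 𝟙 (P.X.obj (Fin.last P.n)) ≫ P.X.map (homOfLE (Fin.le_last (Fin.last P.n))) = 𝟙 _
    rw [Category.id_comp]
    exact P.X.map_id _
  map_comp {P Q S} f g := by
    show (f.θ (Fin.last P.n) ≫ g.θ (f.α (Fin.last P.n))) ≫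
        S.X.map (homOfLE (Fin.le_last (g.α (f.α (Fin.last P.n))))) =
      (f.θ (Fin.last P.n) ≫ Q.X.map (homOfLE (Fin.le_last (f.α (Fin.last P.n))))) ≫
        g.θ (Fin.last Q.n) ≫ S.X.map (homOfLE (Fin.le_last (g.α (Fin.last Q.n))))
    rw [Category.assoc, Category.assoc, ← Category.assoc (Q.X.map _),
      g.natural (Fin.le_last (f.α (Fin.last P.n))), Category.assoc, ← Functor.map_comp,
      homOfLE_comp]

theorem lastChain_eq_of_le {P Q : ChainObj C} {f g : P ⟶ Q} (h : ChainHom.le f g) :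
    lastChain.map f = lastChain.map g := by
  show f.θ (Fin.last P.n) ≫ Q.X.map (homOfLE (Fin.le_last (f.α (Fin.last P.n)))) =
    g.θ (Fin.last P.n) ≫ Q.X.map (homOfLE (Fin.le_last (g.α (Fin.last P.n))))
  rw [h.2 (Fin.last P.n) (h.1 (Fin.last P.n)), Category.assoc, ← Functor.map_comp,
    homOfLE_comp]

/-- The forgetful functor `∫N^{-,+}(C) → ∫N(C)`. -/
def negForget (R : ReedyStruct C) : NegObj R ⥤ ChainObj C where
  obj P := P.chain
  map f := f.1
  map_id _ := rfl
  map_comp _ _ := rfl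

/-- The last-component functor `∫N^{-,+}(C) → C`. -/
def lastNeg (R : ReedyStruct C) : NegObj R ⥤ C := negForget R ⋙ lastChain

/-- The forgetful functor `∫N^{--,+}_+(C) → ∫N^{-,+}(C)`. -/
def strictForget (R : ReedyStruct C) : StrictObj R ⥤ NegObj R where
  obj P := P.toNegObj
  map f := f.1
  map_id _ := rfl
  map_comp _ _ := rfl

/-- The last-component functor `∫N^{--,+}_+(C) → C`. -/
def lastStrict (R : ReedyStruct C) : StrictObj R ⥤ C := strictForget R ⋙ lastNeg R

/-- The last-component functor `Down_*(C) → C`. -/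
def lastDownStar (R : ReedyStruct C) : DownStar R ⥤ C where
  obj P := (lastNeg R).obj P.obj
  map {P Q} f :=
    Quot.lift (fun f' : P.obj ⟶ Q.obj => (lastNeg R).map f')
      (fun _ _ h => lastChain_eq_of_le h) f
  map_id P := (lastNeg R).map_id P.obj
  map_comp {P Q S} f g := by
    induction f using Quot.ind
    induction g using Quot.ind
    exact (lastNeg R).map_comp _ _

/-- The last-component functor `Down(C) → C`. -/
def lastDown (R : ReedyStruct C) : Down R ⥤ C where
  obj P := (lastStrict R).obj P.obj
  map {P Q} f :=
    Quot.lift (fun f' : P.obj ⟶ Q.obj => (lastStrict R).map f')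
      (fun _ _ h => lastChain_eq_of_le h) f
  map_id P := (lastStrict R).map_id P.obj
  map_comp {P Q S} f g := by
    induction f using Quot.ind
    induction g using Quot.ind
    exact (lastStrict R).map_comp _ _

/-- The wide subcategory `Γ₋` of `∫N^{-,+}(C)`: morphisms of the form
`(σ, id) : ([m], X ∘ σ) → ([n], X)` with `σ` surjective, i.e. morphisms whose simplicial
component is surjective and all of whose components are identities. -/
def GammaNeg (R : ReedyStruct C) {P Q : NegObj R} (f : P ⟶ Q) : Prop :=
  Function.Surjective f.1.α ∧ ∀ i, IsIdMor (f.1.θ i)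

/-- The wide subcategory `Γ₊` of `∫N^{-,+}(C)`: morphisms `(δ, θ)` with `δ` injective. -/
def GammaPos (R : ReedyStruct C) {P Q : NegObj R} (f : P ⟶ Q) : Prop :=
  Function.Injective f.1.α

/-- Whiskering (precomposition) with `lastF` is bijective on natural transformations
between functors out of `C`. -/
def WhiskerUnique {Γ : Type u₁} [Category.{v₁} Γ] (lastF : Γ ⥤ C) : Prop :=
  ∀ {D : Type u₂} [Category.{v₂} D] (F G : C ⥤ D)
    (ε : lastF ⋙ F ⟶ lastF ⋙ G), ∃! ε' : F ⟶ G, Functor.whiskerLeft lastF ε' = ε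

/-- `lastF : Γ ⥤ C` is a weak 1-localization of `Γ` at the `last`-weak equivalences
(the morphisms sent by `lastF` to identities). -/
def IsWeakLocalizationAtLastWeq {Γ : Type u₁} [Category.{v₁} Γ] (lastF : Γ ⥤ C) : Prop :=
  (∀ {P Q : Γ} (f : P ⟶ Q), IsIdMor (lastF.map f) → IsIso (lastF.map f)) ∧
  (∀ {E : Type u₂} [Category.{v₂} E] (G : Γ ⥤ E),
    (∀ {P Q : Γ} (f : P ⟶ Q), IsIdMor (lastF.map f) → IsIso (G.map f)) →
    ∃ H : C ⥤ E, Nonempty (lastF ⋙ H ≅ G)) ∧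
  (∀ {E : Type u₂} [Category.{v₂} E] (H H' : C ⥤ E) (θ : lastF ⋙ H ≅ lastF ⋙ H'),
    ∃! θ' : H ≅ H', Functor.isoWhiskerLeft lastF θ' = θ)

section Aux

variable (R : ReedyStruct C)

theorem ReedyStruct.neg_eqToHom {x y : C} (h : x = y) : R.neg (eqToHom h) := by
  subst h; simpa using R.neg_id x

theorem ReedyStruct.pos_eqToHom {x y : C} (h : x = y) : R.pos (eqToHom h) := by
  subst h; simpa using R.pos_id x

theorem split_isId {a z : C} {n : a ⟶ z} {n' : z ⟶ a} (hn : R.neg n) (hn' : R.neg n')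
    (h : n ≫ n' = 𝟙 a) : IsIdMor n ∧ IsIdMor n' := by
  by_cases h1 : IsIdMor n
  · obtain ⟨he, hne⟩ := h1
    subst he
    rw [hne, eqToHom_refl, Category.id_comp] at h
    exact ⟨⟨rfl, hne⟩, ⟨rfl, by simp [h]⟩⟩
  by_cases h2 : IsIdMor n'
  · obtain ⟨he, hne⟩ := h2
    subst he
    exfalso
    apply h1
    rw [hne, eqToHom_refl, Category.comp_id] at h
    exact ⟨rfl, by simp [h]⟩
  · exfalso
    exact R.wf.asymmetric z a (Or.inr ⟨n, hn, h1⟩) (Or.inr ⟨n', hn', h2⟩)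

theorem negFactor_isId {x y z : C} {v : x ⟶ y} (hv : R.pos v) {n : x ⟶ z} {w : z ⟶ y}
    (hn : R.neg n) (hw : R.pos w) (hc : n ≫ w = v) : ∃ h : x = z, n = eqToHom h := by
  obtain ⟨t, ht, huniq⟩ := R.factor_existsUnique v
  have h1 := huniq ⟨z, n, w⟩ ⟨hn, hw, hc⟩
  have h2 := huniq ⟨x, (𝟙 x, v)⟩ ⟨R.neg_id x, hv, Category.id_comp v⟩
  have h3 : (⟨z, (n, w)⟩ : Σ z : C, (x ⟶ z) × (z ⟶ y)) = ⟨x, (𝟙 x, v)⟩ := h1.trans h2.symm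
  injection h3 with h4 h5
  subst h4
  have h6 : (n, w) = (𝟙 z, v) := eq_of_heq h5
  injection h6 with h7 h8
  exact ⟨rfl, by rw [h7, eqToHom_refl]⟩

theorem pos_of_comp_neg {a b c : C} {u : a ⟶ b} {v : b ⟶ c} (hv : R.neg v)
    (h : R.pos (u ≫ v)) : R.pos u := by
  obtain ⟨⟨z, n, p⟩, ⟨hn, hp, he⟩, -⟩ := R.factor_existsUnique u
  obtain ⟨⟨z₂, n₂, p₂⟩, ⟨hn₂, hp₂, he₂⟩, -⟩ := R.factor_existsUnique (p ≫ v)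
  have hc : (n ≫ n₂) ≫ p₂ = u ≫ v := by
    rw [Category.assoc, he₂, ← Category.assoc, he]
  obtain ⟨hz, hnn⟩ := negFactor_isId R h (R.neg_comp _ _ hn hn₂) hp₂ hc
  obtain ⟨⟨hza, hneq⟩, -⟩ := split_isId R hn
    (R.neg_comp _ _ hn₂ (R.neg_eqToHom hz.symm))
    (by rw [← Category.assoc, hnn, eqToHom_trans, eqToHom_refl])
  rw [← he, hneq]
  exact R.pos_comp _ _ (R.pos_eqToHom hza) hp

theorem pos_of_neg_comp {a b c : C} {u : a ⟶ b} {v : b ⟶ c} (hu : R.neg u)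
    (h : R.pos (u ≫ v)) : R.pos v := by
  obtain ⟨⟨z, n, p⟩, ⟨hn, hp, he⟩, -⟩ := R.factor_existsUnique v
  dsimp only at hn hp he
  have hc : (u ≫ n) ≫ p = u ≫ v := by rw [Category.assoc, he]
  obtain ⟨hz, hnn⟩ := negFactor_isId R h (R.neg_comp _ _ hu hn) hp hc
  obtain ⟨-, ⟨hzb, hneq⟩⟩ := split_isId R hu
    (R.neg_comp _ _ hn (R.neg_eqToHom hz.symm))
    (by rw [← Category.assoc, hnn, eqToHom_trans, eqToHom_refl])
  have hn' : n = eqToHom (hzb.trans hz) := by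
    have := congrArg (· ≫ eqToHom hz) hneq
    simpa [Category.assoc, eqToHom_trans, eqToHom_refl] using this
  rw [← he, hn']
  exact R.pos_comp _ _ (R.pos_eqToHom _) hp

theorem ChainHom.le_ext {P Q : ChainObj C} {h f g : ChainHom P Q}
    (hf : ChainHom.le h f) (hg : ChainHom.le h g) (hα : f.α = g.α) : f = g := by
  obtain ⟨fα, fθ, fn⟩ := f
  obtain ⟨gα, gθ, gn⟩ := g
  obtain rfl : fα = gα := hα
  refine ChainHom.ext' rfl (heq_of_eq (funext fun i => ?_))
  rw [hf.2 i (hf.1 i), hg.2 i (hg.1 i)]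

end Aux

section Statements

variable (R : ReedyStruct C)

theorem statement5 {P Q : NegObj R} (f : P ⟶ Q) :
    ∃ (g₀ : P ⟶ Q) (hmax : NegHom.le f g₀ ∧ ∀ g : P ⟶ Q, NegHom.le f g → NegHom.le g g₀),
      Function.Bijective
        (fun g : {g : P ⟶ Q // NegHom.le f g} =>
          (⟨g.1.1.α, fun i => g.2.1 i, fun i => (hmax.2 g.1 g.2).1 i⟩ :
            {β : Fin (P.n + 1) →o Fin (Q.n + 1) //
              (∀ i, f.1.α i ≤ β i) ∧ ∀ i, β i ≤ g₀.1.α i})) ∧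
      ∀ a b : {g : P ⟶ Q // NegHom.le f g},
        NegHom.le a.1 b.1 ↔ ∀ i, a.1.1.α i ≤ b.1.1.α i := by
  classical
  have exmax : ∀ i : Fin (P.n + 1), ∃ mi : Fin (Q.n + 1),
      (∃ h : f.1.α i ≤ mi, R.pos (f.1.θ i ≫ Q.X.map (homOfLE h))) ∧
      ∀ j : Fin (Q.n + 1),
        (∃ h : f.1.α i ≤ j, R.pos (f.1.θ i ≫ Q.X.map (homOfLE h))) → j ≤ mi := by
    intro i
    set s : Finset (Fin (Q.n + 1)) := Finset.univ.filter
      (fun j => ∃ h : f.1.α i ≤ j, R.pos (f.1.θ i ≫ Q.X.map (homOfLE h))) with hs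
    have hne : s.Nonempty := ⟨f.1.α i, by
      erw [hs, Finset.mem_filter]
      refine ⟨Finset.mem_univ _, le_rfl, ?_⟩
      erw [show Q.X.map (homOfLE (le_refl (f.1.α i))) = 𝟙 (Q.chain.X.obj (f.1.α i)) from
        Q.X.map_id _, Category.comp_id]
      exact f.2 i⟩
    refine ⟨s.max' hne, ?_, fun j hj => Finset.le_max' s j ?_⟩
    · simpa [hs, Finset.mem_filter] using s.max'_mem hne
    · simp only [hs, Finset.mem_filter, Finset.mem_univ, true_and]; exact hj
  choose m hm hmle using exmax
  have hαm : ∀ i, f.1.α i ≤ m i := fun i => (hm i).choose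
  have hposm : ∀ i, R.pos (f.1.θ i ≫ Q.X.map (homOfLE (hαm i))) :=
    fun i => (hm i).choose_spec
  have hnatf : ∀ {i j : Fin (P.n + 1)} (h : i ≤ j),
      P.X.map (homOfLE h) ≫ f.1.θ j = f.1.θ i ≫ Q.X.map (homOfLE (f.1.α.monotone h)) :=
    fun h => f.1.natural h
  have hbetween : ∀ (i : Fin (P.n + 1)) (j : Fin (Q.n + 1)) (h1 : f.1.α i ≤ j), j ≤ m i →
      R.pos (f.1.θ i ≫ Q.X.map (homOfLE h1)) := by
    intro i j h1 h2
    refine pos_of_comp_neg R (Q.negMap h2) ?_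
    erw [Category.assoc, ← Functor.map_comp, homOfLE_comp]
    exact hposm i
  have hmono : Monotone m := by
    intro i j hij
    rcases le_total (m i) (f.1.α j) with h | h
    · exact h.trans (hαm j)
    · refine hmle j (m i) ⟨h, ?_⟩
      refine pos_of_neg_comp R (P.negMap hij) ?_
      erw [← Category.assoc, hnatf hij, Category.assoc, ← Functor.map_comp, homOfLE_comp]
      exact hposm i
  have hnat : ∀ (b : Fin (P.n + 1) →o Fin (Q.n + 1)) (hb : ∀ i, f.1.α i ≤ b i)
      {i j : Fin (P.n + 1)} (h : i ≤ j),
      P.X.map (homOfLE h) ≫ (f.1.θ j ≫ Q.X.map (homOfLE (hb j))) =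
      (f.1.θ i ≫ Q.X.map (homOfLE (hb i))) ≫ Q.X.map (homOfLE (b.monotone h)) := by
    intro b hb i j h
    erw [← Category.assoc, hnatf h, Category.assoc, Category.assoc,
      ← Functor.map_comp, ← Functor.map_comp, homOfLE_comp]
    rfl
  let mkHom : ∀ (b : Fin (P.n + 1) →o Fin (Q.n + 1)) (_ : ∀ i, f.1.α i ≤ b i)
      (_ : ∀ i, b i ≤ m i), P ⟶ Q := fun b hb hb2 =>
    ⟨{ α := b, θ := fun i => f.1.θ i ≫ Q.X.map (homOfLE (hb i)),
       natural := fun {i j} h => hnat b hb h }, fun i => hbetween i (b i) (hb i) (hb2 i)⟩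
  let g₀ : P ⟶ Q := mkHom ⟨m, hmono⟩ hαm (fun _ => le_rfl)
  have hle₀ : NegHom.le f g₀ := ⟨hαm, fun i h => rfl⟩
  have hmax2 : ∀ g : P ⟶ Q, NegHom.le f g → NegHom.le g g₀ := by
    intro g hg
    have hg2 : ∀ (i : Fin (P.n + 1)) (h : f.1.α i ≤ g.1.α i),
        g.1.θ i = f.1.θ i ≫ Q.X.map (homOfLE h) := hg.2
    have hgm : ∀ i, g.1.α i ≤ m i := by
      intro i
      refine hmle i (g.1.α i) ⟨hg.1 i, ?_⟩
      rw [← hg2 i (hg.1 i)]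
      exact g.2 i
    refine ⟨hgm, fun i h => ?_⟩
    show f.1.θ i ≫ Q.X.map (homOfLE (hαm i)) = g.1.θ i ≫ Q.X.map (homOfLE h)
    erw [hg2 i (hg.1 i), Category.assoc, ← Functor.map_comp, homOfLE_comp]
  refine ⟨g₀, ⟨hle₀, hmax2⟩, ⟨?_, ?_⟩, ?_⟩
  · intro a b hab
    have hαab : a.1.1.α = b.1.1.α := congrArg Subtype.val hab
    exact Subtype.ext (Subtype.ext (ChainHom.le_ext a.2 b.2 hαab))
  · rintro ⟨β, hβ1, hβ2⟩
    exact ⟨⟨mkHom β hβ1 hβ2, ⟨hβ1, fun i h => rfl⟩⟩, rfl⟩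
  · intro a b
    have ha2 : ∀ (i : Fin (P.n + 1)) (h : f.1.α i ≤ a.1.1.α i),
        a.1.1.θ i = f.1.θ i ≫ Q.X.map (homOfLE h) := a.2.2
    have hb2 : ∀ (i : Fin (P.n + 1)) (h : f.1.α i ≤ b.1.1.α i),
        b.1.1.θ i = f.1.θ i ≫ Q.X.map (homOfLE h) := b.2.2
    refine ⟨fun h => h.1, fun h => ⟨h, fun i hi => ?_⟩⟩
    show b.1.1.θ i = a.1.1.θ i ≫ Q.X.map (homOfLE hi)
    erw [hb2 i (b.2.1 i), ha2 i (a.2.1 i), Category.assoc, ← Functor.map_comp,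
      homOfLE_comp]

end Statements

end ReedyPaper
end

section
/- Let (C, C₋, C₊) be a Reedy category and (α, θ) : ([m], X) → ([n], Y) a morphism in ∫N^{-,+}(C). Then the poset {(β, φ) : (α, θ) ≤ (β, φ)} carries the structure of a bounded distributive lattice whose underlying order is the restricted order ≤; in particular any two elements of this poset have a least upper bound and a greatest lower bound in it. -/
namespace ReedyPaper

open CategoryTheory

universe v₂ u₂ v₁ u₁ v u

variable {C : Type u} [Category.{v} C]

variable {R : ReedyStruct C}

section Statement6Aux

variable {R : ReedyStruct C} {P Q : NegObj R} (f : P ⟶ Q)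

/-- The simplicial component of an element of the over-poset. -/
def projα (g : {g : P ⟶ Q // NegHom.le f g}) : Fin (P.n + 1) → Fin (Q.n + 1) :=
  fun i => g.1.1.α i

theorem projα_inj : Function.Injective (projα f) := by
  intro g g' h
  obtain ⟨⟨⟨α₁, θ₁, nat₁⟩, pos₁⟩, hle₁⟩ := g
  obtain ⟨⟨⟨α₂, θ₂, nat₂⟩, pos₂⟩, hle₂⟩ := g'
  have hα : α₁ = α₂ := OrderHom.ext _ _ (funext fun i => congrFun h i)
  subst hα
  have hθ : θ₁ = θ₂ := funext fun i =>
    (hle₁.2 i (hle₁.1 i)).trans (hle₂.2 i (hle₂.1 i)).symm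
  subst hθ
  rfl

/-- Extend `f` along a pointwise-larger simplicial map. -/
def mkExt (β : Fin (P.n + 1) → Fin (Q.n + 1)) (hmono : Monotone β)
    (hle : ∀ i, f.1.α i ≤ β i)
    (hpos : ∀ (i : Fin (P.n + 1)) (h : f.1.α i ≤ β i),
      R.pos (f.1.θ i ≫ Q.chain.X.map (homOfLE h))) :
    {g : P ⟶ Q // NegHom.le f g} :=
  ⟨⟨{ α := ⟨β, hmono⟩
      θ := fun i => f.1.θ i ≫ Q.chain.X.map (homOfLE (hle i))
      natural := fun {i j} h => by
        rw [← Category.assoc, f.1.natural h, Category.assoc, ← Q.chain.X.map_comp,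
          homOfLE_comp, Category.assoc, ← Q.chain.X.map_comp, homOfLE_comp] },
    fun i => hpos i (hle i)⟩,
   hle, fun i h => rfl⟩

theorem pos_of_mem (g : {g : P ⟶ Q // NegHom.le f g}) (i : Fin (P.n + 1))
    (j : Fin (Q.n + 1)) (e : j = g.1.1.α i) (h : f.1.α i ≤ j) :
    R.pos (f.1.θ i ≫ Q.chain.X.map (homOfLE h)) := by
  subst e
  rw [← g.2.2 i h]
  exact g.1.2 i

/-- Binary join in the over-poset. -/
def supS (a b : {g : P ⟶ Q // NegHom.le f g}) : {g : P ⟶ Q // NegHom.le f g} :=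
  mkExt f (fun i => a.1.1.α i ⊔ b.1.1.α i)
    (Monotone.max a.1.1.α.monotone b.1.1.α.monotone)
    (fun i => le_max_of_le_left (a.2.1 i))
    (fun i h => by
      rcases max_choice (a.1.1.α i) (b.1.1.α i) with e | e
      · exact pos_of_mem f a i _ e h
      · exact pos_of_mem f b i _ e h)

/-- Binary meet in the over-poset. -/
def infS (a b : {g : P ⟶ Q // NegHom.le f g}) : {g : P ⟶ Q // NegHom.le f g} :=
  mkExt f (fun i => a.1.1.α i ⊓ b.1.1.α i)
    (Monotone.min a.1.1.α.monotone b.1.1.α.monotone)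
    (fun i => le_min (a.2.1 i) (b.2.1 i))
    (fun i h => by
      rcases min_choice (a.1.1.α i) (b.1.1.α i) with e | e
      · exact pos_of_mem f a i _ e h
      · exact pos_of_mem f b i _ e h)

theorem le_refl' : NegHom.le f f :=
  ⟨fun i => le_refl _, fun i h => by
    rw [Subsingleton.elim (homOfLE h) (𝟙 (f.1.α i)), Q.chain.X.map_id, Category.comp_id]⟩

end Statement6Aux

section Statements

variable (R : ReedyStruct C)

theorem statement6 {P Q : NegObj R} (f : P ⟶ Q) :
    ∃ L : DistribLattice {g : P ⟶ Q // NegHom.le f g},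
      letI := L
      ∃ _ : BoundedOrder {g : P ⟶ Q // NegHom.le f g},
        ∀ a b : {g : P ⟶ Q // NegHom.le f g}, a ≤ b ↔ NegHom.le a.1 b.1 := by
  classical
  letI : Max {g : P ⟶ Q // NegHom.le f g} := ⟨supS f⟩
  letI : Min {g : P ⟶ Q // NegHom.le f g} := ⟨infS f⟩
  letI : LE {g : P ⟶ Q // NegHom.le f g} := ⟨fun a b => projα f a ≤ projα f b⟩
  letI : LT {g : P ⟶ Q // NegHom.le f g} := ⟨fun a b => projα f a < projα f b⟩
  letI L : DistribLattice {g : P ⟶ Q // NegHom.le f g} :=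
    (projα_inj f).distribLattice (projα f) Iff.rfl Iff.rfl (fun a b => rfl) (fun a b => rfl)
  haveI : Finite {g : P ⟶ Q // NegHom.le f g} := Finite.of_injective _ (projα_inj f)
  haveI : Fintype {g : P ⟶ Q // NegHom.le f g} := Fintype.ofFinite _
  refine ⟨L, ?_, ?_⟩
  · exact
      { bot := ⟨f, le_refl' f⟩
        bot_le := fun a => show projα f _ ≤ projα f a from fun i => a.2.1 i
        top := Finset.univ.sup' ⟨⟨f, le_refl' f⟩, Finset.mem_univ _⟩ id
        le_top := fun a => Finset.le_sup' id (Finset.mem_univ a) }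
  · intro a b
    constructor
    · intro h
      refine ⟨fun i => h i, fun i hi => ?_⟩
      rw [b.2.2 i (b.2.1 i), a.2.2 i (a.2.1 i), Category.assoc, ← Q.chain.X.map_comp,
        homOfLE_comp]
    · intro h i
      exact h.1 i

end Statements

end ReedyPaper
end

section
/- Let (C, C₋, C₊) be a Reedy category and (α, θ), (α', θ') : ([m], X) → ([n], Y) a parallel pair of morphisms in ∫N^{-,+}(C). Then the following are equivalent: (1) (α, θ) ∼ (α', θ'); (2) (α, θ) and (α', θ') have a common upper bound with respect to ≤; (3) the largest elements of {(β, φ) : (α, θ) ≤ (β, φ)} and of {(β, φ) : (α', θ') ≤ (β, φ)} (which exist) coincide. -/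
namespace ReedyPaper

open CategoryTheory

universe v₂ u₂ v₁ u₁ v u

variable {C : Type u} [Category.{v} C]

variable {R : ReedyStruct C}

section Statements

variable (R : ReedyStruct C)

/-- Key cancellation lemma: if `μ` is in `C₋` and `μ ≫ v` is in `C₊`, then `v` is in `C₊`. -/
theorem neg_cancel_pos {x y c : C} (μ : x ⟶ y) (v : y ⟶ c)
    (hμ : R.neg μ) (hpos : R.pos (μ ≫ v)) : R.pos v := by
  obtain ⟨⟨w, vneg, vpos⟩, ⟨hn, hp, hc⟩, -⟩ := R.factor_existsUnique v
  obtain ⟨t, -, huniq⟩ := R.factor_existsUnique (μ ≫ v)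
  have e1 := huniq ⟨x, (𝟙 x, μ ≫ v)⟩ ⟨R.neg_id x, hpos, Category.id_comp _⟩
  have e2 := huniq ⟨w, (μ ≫ vneg, vpos)⟩
    ⟨R.neg_comp _ _ hμ hn, hp, by rw [Category.assoc, hc]⟩
  have e3 : (⟨w, (μ ≫ vneg, vpos)⟩ : Σ z : C, (x ⟶ z) × (z ⟶ c)) =
      ⟨x, (𝟙 x, μ ≫ v)⟩ := e2.trans e1.symm
  have hw : w = x := congrArg Sigma.fst e3
  subst hw
  have e4 : (μ ≫ vneg, vpos) = (𝟙 w, μ ≫ v) := eq_of_heq (Sigma.ext_iff.mp e3).2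
  have h1 : μ ≫ vneg = 𝟙 w := congrArg Prod.fst e4
  -- one of μ, vneg is an identity morphism, by well-foundedness
  have hcase : IsIdMor μ ∨ IsIdMor vneg := by
    by_contra hcon
    push_neg at hcon
    exact R.wf.asymmetric y w (Or.inr ⟨μ, hμ, hcon.1⟩) (Or.inr ⟨vneg, hn, hcon.2⟩)
  rcases hcase with ⟨h, hm⟩ | ⟨h, hv⟩
  · subst h
    rw [eqToHom_refl] at hm
    rw [hm, Category.id_comp] at h1
    rw [← hc, h1, Category.id_comp]
    exact hp
  · subst h
    rw [eqToHom_refl] at hv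
    rw [← hc, hv, Category.id_comp]
    exact hp

theorem NegHom.le_refl {P Q : NegObj R} (f : P ⟶ Q) : NegHom.le f f := by
  refine ⟨fun i => _root_.le_refl _, fun i h => ?_⟩
  rw [show Q.chain.X.map (homOfLE h) = 𝟙 _ from Q.chain.X.map_id _, Category.comp_id]

theorem NegHom.le_trans {P Q : NegObj R} {f g h : P ⟶ Q}
    (h1 : NegHom.le f g) (h2 : NegHom.le g h) : NegHom.le f h := by
  refine ⟨fun i => (h1.1 i).trans (h2.1 i), fun i hle => ?_⟩
  rw [h2.2 i (h2.1 i), h1.2 i (h1.1 i), Category.assoc, ← Q.chain.X.map_comp,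
    homOfLE_comp]

theorem NegHom.le_antisymm {P Q : NegObj R} {f g : P ⟶ Q}
    (h1 : NegHom.le f g) (h2 : NegHom.le g f) : f = g := by
  apply Subtype.ext
  have hα : f.1.α = g.1.α :=
    OrderHom.ext _ _ (funext fun i => _root_.le_antisymm (h1.1 i) (h2.1 i))
  obtain ⟨f, hf⟩ := f
  obtain ⟨g, hg⟩ := g
  obtain ⟨fα, fθ, fn⟩ := f
  obtain ⟨gα, gθ, gn⟩ := g
  dsimp at hα
  subst hα
  refine ChainHom.ext' rfl (heq_of_eq (funext fun i => ?_))
  have hstep := h1.2 i (_root_.le_refl _)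
  dsimp at hstep ⊢
  rw [hstep, Q.chain.X.map_id, Category.comp_id]

/-- Every morphism of `∫N^{-,+}(C)` has a largest element above it w.r.t. `≤`. -/
theorem NegHom.exists_max {P Q : NegObj R} (f : P ⟶ Q) :
    ∃ m : P ⟶ Q, NegHom.le f m ∧ ∀ g : P ⟶ Q, NegHom.le f g → NegHom.le g m := by
  classical
  let S : Fin (P.n + 1) → Finset (Fin (Q.n + 1)) := fun i =>
    Finset.univ.filter
      (fun j => ∃ h : f.1.α i ≤ j, R.pos (f.1.θ i ≫ Q.chain.X.map (homOfLE h)))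
  have hmem_iff : ∀ i j, j ∈ S i ↔
      ∃ h : f.1.α i ≤ j, R.pos (f.1.θ i ≫ Q.chain.X.map (homOfLE h)) := by
    intro i j
    simp [S]
  have hmem_self : ∀ i, f.1.α i ∈ S i := by
    intro i
    refine (hmem_iff _ _).2 ?_
    refine ⟨_root_.le_refl _, ?_⟩
    rw [show Q.chain.X.map (homOfLE (_root_.le_refl (f.1.α i))) = 𝟙 _ from
      Q.chain.X.map_id _, Category.comp_id]
    exact f.2 i
  have hSne : ∀ i, (S i).Nonempty := fun i => ⟨_, hmem_self i⟩
  let M : Fin (P.n + 1) → Fin (Q.n + 1) := fun i => (S i).max' (hSne i)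
  have hMmem : ∀ i, M i ∈ S i := fun i => Finset.max'_mem _ _
  have hMle : ∀ i, f.1.α i ≤ M i := fun i => ((hmem_iff _ _).1 (hMmem i)).choose
  have hMpos : ∀ i (h : f.1.α i ≤ M i),
      R.pos (f.1.θ i ≫ Q.chain.X.map (homOfLE h)) :=
    fun i h => ((hmem_iff _ _).1 (hMmem i)).choose_spec
  have hMono : Monotone M := by
    intro i j hij
    rcases le_total (M i) (f.1.α j) with hb | hb
    · exact hb.trans (Finset.le_max' _ _ (hmem_self j))
    · refine Finset.le_max' _ _ ((hmem_iff _ _).2 ⟨hb, ?_⟩)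
      refine neg_cancel_pos R (P.chain.X.map (homOfLE hij)) _ (P.negMap hij) ?_
      have heq : P.chain.X.map (homOfLE hij) ≫ f.1.θ j ≫ Q.chain.X.map (homOfLE hb) =
          f.1.θ i ≫ Q.chain.X.map (homOfLE (hMle i)) := by
        rw [← Category.assoc, f.1.natural hij, Category.assoc]
        congr 1
        exact (Q.chain.X.map_comp _ _).symm
      rw [heq]
      exact hMpos i (hMle i)
  refine ⟨⟨⟨⟨M, hMono⟩, fun i => f.1.θ i ≫ Q.chain.X.map (homOfLE (hMle i)), ?_⟩,
      fun i => hMpos i (hMle i)⟩, ⟨hMle, fun i h => rfl⟩, ?_⟩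
  · intro i j h
    rw [← Category.assoc, f.1.natural h, Category.assoc, ← Q.chain.X.map_comp,
      homOfLE_comp, Category.assoc, ← Q.chain.X.map_comp, homOfLE_comp]
  · intro g hg
    have hgle : ∀ i, g.1.α i ≤ M i := by
      intro i
      refine Finset.le_max' _ _ ((hmem_iff _ _).2 ⟨hg.1 i, ?_⟩)
      rw [← hg.2 i (hg.1 i)]
      exact g.2 i
    refine ⟨hgle, fun i h => ?_⟩
    show f.1.θ i ≫ Q.chain.X.map (homOfLE (hMle i)) =
      g.1.θ i ≫ Q.chain.X.map (homOfLE h)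
    rw [hg.2 i (hg.1 i), Category.assoc, ← Q.chain.X.map_comp, homOfLE_comp]

/-- `∼` implies the existence of a common upper bound. -/
theorem NegHom.equiv_ub {P Q : NegObj R} {f f' : P ⟶ Q} (h : NegHom.equiv f f') :
    ∃ u : P ⟶ Q, NegHom.le f u ∧ NegHom.le f' u := by
  induction h with
  | rel a b hab => exact ⟨b, hab, NegHom.le_refl R b⟩
  | refl a => exact ⟨a, NegHom.le_refl R a, NegHom.le_refl R a⟩
  | symm a b hab ih => exact ⟨ih.choose, ih.choose_spec.2, ih.choose_spec.1⟩
  | trans a b c hab hbc ih1 ih2 =>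
    obtain ⟨u, hau, hbu⟩ := ih1
    obtain ⟨v, hbv, hcv⟩ := ih2
    obtain ⟨m, hbm, hmax⟩ := NegHom.exists_max R b
    exact ⟨m, NegHom.le_trans R hau (hmax u hbu), NegHom.le_trans R hcv (hmax v hbv)⟩

theorem statement7 {P Q : NegObj R} (f f' : P ⟶ Q) :
    (NegHom.equiv f f' ↔ ∃ h : P ⟶ Q, NegHom.le f h ∧ NegHom.le f' h) ∧
    (NegHom.equiv f f' ↔
      ∀ m m' : P ⟶ Q,
        (NegHom.le f m ∧ ∀ g : P ⟶ Q, NegHom.le f g → NegHom.le g m) →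
        (NegHom.le f' m' ∧ ∀ g : P ⟶ Q, NegHom.le f' g → NegHom.le g m') → m = m') := by
  constructor
  · constructor
    · exact NegHom.equiv_ub R
    · rintro ⟨h, h1, h2⟩
      exact .trans _ _ _ (.rel _ _ h1) (.symm _ _ (.rel _ _ h2))
  · constructor
    · rintro hequiv m m' ⟨hfm, hmax⟩ ⟨hf'm', hmax'⟩
      obtain ⟨u, hu, hu'⟩ := NegHom.equiv_ub R hequiv
      have hum : NegHom.le u m := hmax u hu
      have hum' : NegHom.le u m' := hmax' u hu'
      have h1 : NegHom.le m m' := hmax' m (NegHom.le_trans R hu' hum)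
      have h2 : NegHom.le m' m := hmax m' (NegHom.le_trans R hu hum')
      exact NegHom.le_antisymm R h1 h2
    · intro H
      obtain ⟨m, hfm, hmax⟩ := NegHom.exists_max R f
      obtain ⟨m', hf'm', hmax'⟩ := NegHom.exists_max R f'
      have hmm : m = m' := H m m' ⟨hfm, hmax⟩ ⟨hf'm', hmax'⟩
      exact .trans _ _ _ (.rel _ _ hfm) (.symm _ _ (.rel _ _ (hmm ▸ hf'm')))

end Statements

end ReedyPaper
end
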